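/- For any independence model I over a finite variable set V with at least 2 variables, and any triple ⟨X_i, X_j | X_K⟩ ∈ I with i ≠ j and K ⊆ V \ {X_i, X_j}, there exists a DAG G over V such that the set of d-separation statements of G between pairs of singletons is exactly {⟨X_i, X_j | X_K⟩} (together with its symmetric counterpart). -/

import Mathlib

open Classical
attribute [local instance] Classical.propDecidable

variable {V : Type} [Fintype V] [DecidableEq V]

/-- A conditional independence model over variable set `V`:
`I A B C` means `A` is independent of `B` given `C`. -/
abbrev IndepModel (V : Type) :=
  Finset V → Finset V → Finset V → Prop

/-- Semigraphoid axioms. -/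
structure Semigraphoid (I : IndepModel V) : Prop where
  symm : ∀ A B C, I A B C → I B A C
  decomposition : ∀ A B W C, I A (B ∪ W) C → I A B C ∧ I A W C
  weakUnion : ∀ A B W C, I A (B ∪ W) C → I A B (C ∪ W)
  contraction : ∀ A B W C, I A B C → I A W (C ∪ B) → I A (B ∪ W) C

/-- Graphoid axioms. -/
structure Graphoid (I : IndepModel V) extends Semigraphoid I : Prop where
  intersection : ∀ A B W C, I A B (C ∪ W) → I A W (C ∪ B) → I A (B ∪ W) C

/-- Compositional graphoid axioms. -/
structure CompGraphoid (I : IndepModel V) extends Graphoid I : Prop where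
  composition : ∀ A B W C, I A B C → I A W C → I A (B ∪ W) C

/-- `M` is a Markov blanket of `X` relative to `Z`. -/
def MarkovBlanket (I : IndepModel V) (X : V) (Z M : Finset V) : Prop :=
  M ⊆ Z ∧ I {X} (Z \ M) M

/-- `M` is a Markov boundary (minimal Markov blanket) of `X` relative to `Z`. -/
def MarkovBoundary (I : IndepModel V) (X : V) (Z M : Finset V) : Prop :=
  MarkovBlanket I X Z M ∧ ∀ M' ⊂ M, ¬ I {X} (Z \ M') M'

/-- A directed graph on `V`, given by its finite set of directed edges. -/
abbrev EdgeSet (V : Type) := Finset (V × V)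

def Adj (E : EdgeSet V) (a b : V) : Prop := (a, b) ∈ E

/-- Acyclicity: no vertex reaches itself by a nontrivial directed path. -/
def IsDAG (E : EdgeSet V) : Prop := ∀ v, ¬ Relation.TransGen (Adj E) v v

def parents (E : EdgeSet V) (v : V) : Finset V :=
  (E.filter (fun e => e.2 = v)).image Prod.fst

def IsCollider (E : EdgeSet V) (x y z : V) : Prop := Adj E x y ∧ Adj E z y

/-- The middle vertex `y` of a path triple `x - y - z` does not block the path
given conditioning set `C`. -/
def ActiveTriple (E : EdgeSet V) (C : Finset V) (x y z : V) : Prop :=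
  (IsCollider E x y z ∧ ∃ d ∈ C, Relation.ReflTransGen (Adj E) y d) ∨
  (¬ IsCollider E x y z ∧ y ∉ C)

/-- `a` and `b` are d-connected given `C` in the graph `E`. -/
def DConn (E : EdgeSet V) (C : Finset V) (a b : V) : Prop :=
  ∃ p : List V, 2 ≤ p.length ∧ p.head? = some a ∧ p.getLast? = some b ∧
    (∀ (i : ℕ) (h : i + 1 < p.length),
      Adj E (p.get ⟨i, by omega⟩) (p.get ⟨i + 1, h⟩) ∨
      Adj E (p.get ⟨i + 1, h⟩) (p.get ⟨i, by omega⟩)) ∧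
    (∀ (i : ℕ) (h : i + 2 < p.length),
      ActiveTriple E C (p.get ⟨i, by omega⟩) (p.get ⟨i + 1, by omega⟩) (p.get ⟨i + 2, h⟩))

/-- `A` and `B` are d-separated given `C`. -/
def DSep (E : EdgeSet V) (A B C : Finset V) : Prop :=
  ∀ a ∈ A, ∀ b ∈ B, ¬ DConn E C a b

def PairwiseDisjoint3 (A B C : Finset V) : Prop :=
  Disjoint A B ∧ Disjoint A C ∧ Disjoint B C

/-- `I(G) ⊆ I(P)`: every d-separation of the graph is an independence of `I`. -/
def Markovian (E : EdgeSet V) (I : IndepModel V) : Prop :=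
  ∀ A B C, PairwiseDisjoint3 A B C → DSep E A B C → I A B C

/-- `I(P) ⊆ I(G)`: every independence of `I` is a d-separation of the graph. -/
def FaithfulTo (E : EdgeSet V) (I : IndepModel V) : Prop :=
  ∀ A B C, PairwiseDisjoint3 A B C → I A B C → DSep E A B C

/-- `I(E) ⊆ I(E')` : every d-separation statement of `E` holds in `E'`. -/
def ISub (E E' : EdgeSet V) : Prop :=
  ∀ A B C, PairwiseDisjoint3 A B C → DSep E A B C → DSep E' A B C

/-- Markov equivalence: same d-separation statements. -/
def MEquiv (E E' : EdgeSet V) : Prop := ISub E E' ∧ ISub E' E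

/-- Markovian DAGs. -/
def CMC (I : IndepModel V) : Set (EdgeSet V) := {G | IsDAG G ∧ Markovian G I}

/-- Faithful DAGs. -/
def CFC (I : IndepModel V) : Set (EdgeSet V) := {G | G ∈ CMC I ∧ FaithfulTo G I}

/-- SGS-minimal DAGs: Markovian with no Markovian proper subgraph. -/
def SGSmin (I : IndepModel V) : Set (EdgeSet V) :=
  {G | G ∈ CMC I ∧ ∀ G' ⊆ G, G' ∈ CMC I → G' = G}

/-- Frugal DAGs: Markovian with minimal edge count. -/
def Fr (I : IndepModel V) : Set (EdgeSet V) :=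
  {G | G ∈ CMC I ∧ ∀ G' ∈ CMC I, G.card ≤ G'.card}

/-- Uniquely frugal DAGs. -/
def uFr (I : IndepModel V) : Set (EdgeSet V) :=
  {G | G ∈ Fr I ∧ ∀ G' ∈ Fr I, MEquiv G' G}

/-- P-minimal DAGs: Markovian `G` such that no Markovian `G'` has `I(G) ⊊ I(G')`. -/
def Pm (I : IndepModel V) : Set (EdgeSet V) :=
  {G | G ∈ CMC I ∧ ∀ G' ∈ CMC I, ISub G G' → ISub G' G}

/-- Uniquely P-minimal DAGs. -/
def uPm (I : IndepModel V) : Set (EdgeSet V) :=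
  {G | G ∈ Pm I ∧ ∀ G' ∈ Pm I, MEquiv G' G}

/-- A list is a permutation of the vertices of `V`. -/
def IsPermList (π : List V) : Prop := π.Nodup ∧ ∀ v : V, v ∈ π

/-- The set of vertices preceding `k` in the permutation `π`. -/
def pre (π : List V) (k : V) : Finset V := (π.takeWhile (fun x => x != k)).toFinset

/-- The DAG induced from a permutation `π` by the Raskutti–Uhler (RU) construction:
`j → k` is an edge iff `j` precedes `k` in `π` and `X_j` is dependent on `X_k`
given all other predecessors of `k`. -/
noncomputable def RUedges (I : IndepModel V) (π : List V) : EdgeSet V :=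
  Finset.univ.filter
    (fun e => e.1 ∈ pre π e.2 ∧ ¬ I {e.1} {e.2} ((pre π e.2).erase e.1))

/-- `j → k` is a covered edge of `E`. -/
def CoveredEdge (E : EdgeSet V) (j k : V) : Prop :=
  (j, k) ∈ E ∧ parents E j = (parents E k).erase j

/-- `j → k` is a singular edge of `E`: no directed path from `j` to `k` other than
the edge itself. -/
def SingularEdge (E : EdgeSet V) (j k : V) : Prop :=
  (j, k) ∈ E ∧
    ∀ i, Relation.TransGen (Adj E) j i → Relation.TransGen (Adj E) i k → i = j ∨ i = k

/-- `π` is a causal order of the graph `E`: every ancestor of a vertex precedes it. -/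
def CausalOrder (E : EdgeSet V) (π : List V) : Prop :=
  IsPermList π ∧ ∀ a b, Relation.TransGen (Adj E) a b → π.idxOf a < π.idxOf b

/-- Two permutations differ by one adjacent transposition. -/
def AdjTrans (π τ : List V) : Prop :=
  ∃ (δ₁ δ₂ : List V) (a b : V), π = δ₁ ++ a :: b :: δ₂ ∧ τ = δ₁ ++ b :: a :: δ₂

/-- The non-descendants of `j` in the graph `E`. -/
noncomputable def nonDesc (E : EdgeSet V) (j : V) : Finset V :=
  Finset.univ.filter (fun i => ¬ Relation.ReflTransGen (Adj E) j i)


namespace SingleCI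

variable {V : Type} [Fintype V] [DecidableEq V]

/-- Level of a vertex in the ordering: `i` first, then `K`, then `j`, then the rest. -/
noncomputable def lvl (i j : V) (K : Finset V) (v : V) : ℕ :=
  if v = i then 0 else if v ∈ K then 1 else if v = j then 2 else 3

/-- An injective "position" function compatible with the levels. -/
noncomputable def ordv (i j : V) (K : Finset V) (v : V) : ℕ :=
  lvl i j K v * Fintype.card V + ((Fintype.equivFin V) v : ℕ)

lemma enum_lt (v : V) : ((Fintype.equivFin V) v : ℕ) < Fintype.card V :=
  (Fintype.equivFin V v).isLt

lemma ordv_lt_of_lvl_lt {i j : V} {K : Finset V} {a b : V}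
    (h : lvl i j K a < lvl i j K b) : ordv i j K a < ordv i j K b := by
  unfold ordv
  have ha := enum_lt (V := V) a
  have hb := enum_lt (V := V) b
  have h1 : lvl i j K a + 1 ≤ lvl i j K b := h
  calc lvl i j K a * Fintype.card V + ((Fintype.equivFin V) a : ℕ)
      < (lvl i j K a + 1) * Fintype.card V := by nlinarith
    _ ≤ lvl i j K b * Fintype.card V := Nat.mul_le_mul_right _ h1
    _ ≤ _ := Nat.le_add_right _ _

lemma lvl_le_of_ordv_lt {i j : V} {K : Finset V} {a b : V}
    (h : ordv i j K a < ordv i j K b) : lvl i j K a ≤ lvl i j K b := by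
  by_contra hc
  push_neg at hc
  exact absurd (ordv_lt_of_lvl_lt hc) (by omega)

lemma ordv_ne {i j : V} {K : Finset V} {a b : V} (h : a ≠ b) :
    ordv i j K a ≠ ordv i j K b := by
  intro he
  rcases lt_trichotomy (lvl i j K a) (lvl i j K b) with h1 | h1 | h1
  · exact absurd he (ne_of_lt (ordv_lt_of_lvl_lt h1))
  · apply h
    apply (Fintype.equivFin V).injective
    unfold ordv at he
    rw [h1] at he
    exact Fin.ext (by omega)
  · exact absurd he.symm (ne_of_lt (ordv_lt_of_lvl_lt h1))

lemma lvl_i {i j : V} {K : Finset V} : lvl i j K i = 0 := by simp [lvl]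

lemma lvl_K {i j : V} {K : Finset V} {v : V} (hv : v ∈ K) (hiK : i ∉ K) :
    lvl i j K v = 1 := by
  have : v ≠ i := fun h => hiK (h ▸ hv)
  simp [lvl, this, hv]

lemma lvl_j {i j : V} {K : Finset V} (hij : i ≠ j) (hjK : j ∉ K) :
    lvl i j K j = 2 := by
  simp [lvl, hij.symm, hjK]

lemma lvl_R {i j : V} {K : Finset V} {v : V} (h1 : v ≠ i) (h2 : v ∉ K) (h3 : v ≠ j) :
    lvl i j K v = 3 := by simp [lvl, h1, h2, h3]

lemma lvl_le_three {i j : V} {K : Finset V} (v : V) : lvl i j K v ≤ 3 := by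
  unfold lvl; split_ifs <;> omega

lemma eq_i_of_lvl_zero {i j : V} {K : Finset V} {v : V} (h : lvl i j K v = 0) : v = i := by
  unfold lvl at h; split_ifs at h <;> first | assumption | omega

lemma mem_K_of_lvl_one {i j : V} {K : Finset V} {v : V} (h : lvl i j K v = 1) : v ∈ K := by
  unfold lvl at h; split_ifs at h <;> first | assumption | omega

lemma eq_j_of_lvl_two {i j : V} {K : Finset V} {v : V} (h : lvl i j K v = 2) : v = j := by
  unfold lvl at h; split_ifs at h <;> first | assumption | omega

/-- The DAG: complete graph minus the `i–j` edge, oriented by `ordv`. -/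
noncomputable def EC (i j : V) (K : Finset V) : EdgeSet V :=
  Finset.univ.filter (fun e => ordv i j K e.1 < ordv i j K e.2 ∧ ¬(e.1 = i ∧ e.2 = j))

lemma adj_iff {i j : V} {K : Finset V} {a b : V} :
    Adj (EC i j K) a b ↔ (ordv i j K a < ordv i j K b ∧ ¬(a = i ∧ b = j)) := by
  unfold Adj EC
  simp [Finset.mem_filter]

lemma adj_ordv {i j : V} {K : Finset V} {a b : V} (h : Adj (EC i j K) a b) :
    ordv i j K a < ordv i j K b := (adj_iff.mp h).1

lemma desc_le {i j : V} {K : Finset V} {a b : V}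
    (h : Relation.ReflTransGen (Adj (EC i j K)) a b) : ordv i j K a ≤ ordv i j K b := by
  induction h with
  | refl => exact le_refl _
  | tail _ hd ih => exact ih.trans (le_of_lt (adj_ordv hd))

lemma isdag_EC (i j : V) (K : Finset V) : IsDAG (EC i j K) := by
  intro v hv
  have key : ∀ a b : V, Relation.TransGen (Adj (EC i j K)) a b →
      ordv i j K a < ordv i j K b := by
    intro a b h
    induction h with
    | single h => exact adj_ordv h
    | tail _ h ih => exact ih.trans (adj_ordv h)
  exact absurd (key v v hv) (lt_irrefl _)

lemma active_symm {E : EdgeSet V} {C : Finset V} {x y z : V}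
    (h : ActiveTriple E C x y z) : ActiveTriple E C z y x := by
  unfold ActiveTriple IsCollider at *
  rcases h with ⟨⟨h1, h2⟩, hd⟩ | ⟨hnc, hy⟩
  · exact Or.inl ⟨⟨h2, h1⟩, hd⟩
  · exact Or.inr ⟨fun ⟨a1, a2⟩ => hnc ⟨a2, a1⟩, hy⟩

lemma dconn_symm {E : EdgeSet V} {C : Finset V} {a b : V} (h : DConn E C a b) :
    DConn E C b a := by
  obtain ⟨p, hlen, hh, hl, hadj, htri⟩ := h
  have hn : p.reverse.length = p.length := List.length_reverse
  refine ⟨p.reverse, by omega, ?_, ?_, ?_, ?_⟩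
  · rw [List.head?_reverse]; exact hl
  · rw [List.getLast?_reverse]; exact hh
  · intro t ht
    rw [hn] at ht
    have e1 : p.reverse.get ⟨t, by omega⟩ = p.get ⟨p.length - 1 - t, by omega⟩ := by
      simp [List.get_eq_getElem, List.getElem_reverse]
    have e2 : p.reverse.get ⟨t + 1, by omega⟩ = p.get ⟨p.length - 1 - (t+1), by omega⟩ := by
      simp [List.get_eq_getElem, List.getElem_reverse]
    rw [e1, e2]
    have h1 : p.length - 1 - (t+1) = p.length - 2 - t := by omega
    have h2 : p.length - 1 - t = (p.length - 2 - t) + 1 := by omega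
    simp only [h1, h2]
    exact (hadj (p.length - 2 - t) (by omega)).symm
  · intro t ht
    rw [hn] at ht
    have e1 : p.reverse.get ⟨t, by omega⟩ = p.get ⟨p.length - 1 - t, by omega⟩ := by
      simp [List.get_eq_getElem, List.getElem_reverse]
    have e2 : p.reverse.get ⟨t + 1, by omega⟩ = p.get ⟨p.length - 1 - (t+1), by omega⟩ := by
      simp [List.get_eq_getElem, List.getElem_reverse]
    have e3 : p.reverse.get ⟨t + 2, by omega⟩ = p.get ⟨p.length - 1 - (t+2), by omega⟩ := by
      simp [List.get_eq_getElem, List.getElem_reverse]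
    rw [e1, e2, e3]
    have h1 : p.length - 1 - (t+2) = p.length - 3 - t := by omega
    have h2 : p.length - 1 - (t+1) = (p.length - 3 - t) + 1 := by omega
    have h3 : p.length - 1 - t = (p.length - 3 - t) + 2 := by omega
    simp only [h1, h2, h3]
    exact active_symm (htri (p.length - 3 - t) (by omega))

lemma dconn_pair {E : EdgeSet V} {C : Finset V} {a b : V}
    (hab : Adj E a b ∨ Adj E b a) : DConn E C a b := by
  refine ⟨[a, b], by simp, rfl, rfl, ?_, ?_⟩
  · intro t ht
    simp only [List.length_cons, List.length_nil] at ht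
    have : t = 0 := by omega
    subst this
    exact hab
  · intro t ht
    simp only [List.length_cons, List.length_nil] at ht
    omega

lemma dconn_triple {E : EdgeSet V} {C : Finset V} {a b c : V}
    (h1 : Adj E a b ∨ Adj E b a) (h2 : Adj E b c ∨ Adj E c b)
    (h3 : ActiveTriple E C a b c) : DConn E C a c := by
  refine ⟨[a, b, c], by simp, rfl, rfl, ?_, ?_⟩
  · intro t ht
    simp only [List.length_cons, List.length_nil] at ht
    have ht2 : t = 0 ∨ t = 1 := by omega
    rcases ht2 with rfl | rfl
    · exact h1
    · exact h2
  · intro t ht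
    simp only [List.length_cons, List.length_nil] at ht
    have : t = 0 := by omega
    subst this
    exact h3

set_option maxHeartbeats 2000000 in
/-- The key blocking lemma: no active walk from `i` to `j` given `K`. -/
lemma no_walk {i j : V} {K : Finset V} (hij : i ≠ j) (hKi : i ∉ K) (hKj : j ∉ K) :
    ¬ DConn (EC i j K) K i j := by
  rintro ⟨p, hlen, hh, hl, hadj, htri⟩
  have hne : p ≠ [] := by intro h; simp [h] at hlen
  set n := p.length with hnn
  have h0 : p.get ⟨0, by omega⟩ = i := by
    have h1 := List.head?_eq_head hne
    rw [hh] at h1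
    have h2 := List.head_eq_getElem hne
    simp only [List.get_eq_getElem]
    rw [← h2]
    exact Option.some_injective _ h1.symm
  have hlastg : p.get ⟨n - 1, by omega⟩ = j := by
    have h1 := List.getLast?_eq_getLast hne
    rw [hl] at h1
    have h2 := List.getLast_eq_getElem hne
    simp only [List.get_eq_getElem]
    rw [← h2]
    exact Option.some_injective _ h1.symm
  -- length at least 3
  have hn3 : 3 ≤ n := by
    by_contra hc
    have hn2 : n = 2 := by omega
    have hA := hadj 0 (by omega)
    rw [h0] at hA
    simp only [show (0 + 1 : ℕ) = n - 1 from by omega] at hA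
    rw [hlastg] at hA
    rcases hA with h | h
    · exact (adj_iff.mp h).2 ⟨rfl, rfl⟩
    · have h1 := adj_ordv h
      have h2 : lvl i j K i < lvl i j K j := by
        rw [lvl_i, lvl_j hij hKj]; omega
      exact lt_asymm h1 (ordv_lt_of_lvl_lt h2)
  have key : ∀ t (ht1 : 1 ≤ t) (ht2 : t ≤ n - 1),
      lvl i j K (p.get ⟨n - 1 - t, by omega⟩) = 3 ∧
      ordv i j K (p.get ⟨n - t, by omega⟩) < ordv i j K (p.get ⟨n - 1 - t, by omega⟩) := by
    intro t
    induction t with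
    | zero => exact fun h _ => absurd h (by omega)
    | succ t ih =>
      intro _ hle
      rcases Nat.eq_zero_or_pos t with rfl | ht1
      · -- base case: the vertex before j
        simp only [show n - 1 - (0 + 1) = n - 2 from by omega,
          show n - (0 + 1) = n - 1 from by omega]
        rw [hlastg]
        obtain ⟨y, hy⟩ : ∃ v, v = p.get ⟨n - 2, by omega⟩ := ⟨_, rfl⟩
        rw [← hy]
        have hA := hadj (n - 2) (by omega)
        simp only [show (n - 2) + 1 = n - 1 from by omega] at hA
        rw [hlastg, ← hy] at hA
        -- y ∉ K
        have hyK : y ∉ K := by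
          intro hyKmem
          have hT := htri (n - 3) (by omega)
          simp only [show (n - 3) + 1 = n - 2 from by omega,
            show (n - 3) + 2 = n - 1 from by omega] at hT
          rw [hlastg, ← hy] at hT
          rcases hT with ⟨⟨_, hcol⟩, _⟩ | ⟨_, hnK⟩
          · have h1 := adj_ordv hcol
            have h2 : lvl i j K y < lvl i j K j := by
              rw [lvl_K hyKmem hKi, lvl_j hij hKj]; omega
            exact lt_asymm h1 (ordv_lt_of_lvl_lt h2)
          · exact hnK hyKmem
        rcases hA with h | h
        · exfalso
          have hord := adj_ordv h
          have hyi : y ≠ i := fun hyi => (adj_iff.mp h).2 ⟨hyi, rfl⟩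
          have hyj : y ≠ j := by
            intro he
            rw [he] at hord
            exact lt_irrefl _ hord
          have h3 : lvl i j K y = 3 := lvl_R hyi hyK hyj
          have hle2 := lvl_le_of_ordv_lt hord
          rw [h3, lvl_j hij hKj] at hle2
          omega
        · have hord := adj_ordv h
          have hge := lvl_le_of_ordv_lt hord
          rw [lvl_j hij hKj] at hge
          have hy3 : lvl i j K y = 3 := by
            have h33 := lvl_le_three (i := i) (j := j) (K := K) y
            by_contra hne3
            have h2 : lvl i j K y = 2 := by omega
            have hej := eq_j_of_lvl_two h2
            rw [hej] at hord
            exact lt_irrefl _ hord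
          exact ⟨hy3, hord⟩
      · -- inductive step
        have ih2 := ih ht1 (by omega)
        simp only [show n - 1 - (t + 1) = n - 2 - t from by omega,
          show n - (t + 1) = n - 1 - t from by omega]
        obtain ⟨y, hy⟩ : ∃ v, v = p.get ⟨n - 1 - t, by omega⟩ := ⟨_, rfl⟩
        obtain ⟨x, hx⟩ : ∃ v, v = p.get ⟨n - 2 - t, by omega⟩ := ⟨_, rfl⟩
        obtain ⟨z, hz⟩ : ∃ v, v = p.get ⟨n - t, by omega⟩ := ⟨_, rfl⟩
        rw [← hy, ← hx]
        rw [← hy, ← hz] at ih2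
        obtain ⟨hy3, hord⟩ := ih2
        have hAzy : Adj (EC i j K) z y := by
          have hA := hadj (n - 1 - t) (by omega)
          simp only [show (n - 1 - t) + 1 = n - t from by omega] at hA
          rw [← hy, ← hz] at hA
          rcases hA with h | h
          · exact absurd (adj_ordv h) (lt_asymm hord)
          · exact h
        have hT := htri (n - 2 - t) (by omega)
        simp only [show (n - 2 - t) + 1 = n - 1 - t from by omega,
          show (n - 2 - t) + 2 = n - t from by omega] at hT
        rw [← hy, ← hx, ← hz] at hT
        have hyK : y ∉ K := by
          intro hm; rw [lvl_K hm hKi] at hy3; omega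
        rcases hT with ⟨_, d, hdK, hdesc⟩ | ⟨hnc, _⟩
        · exfalso
          have h1 := desc_le hdesc
          have h2 : lvl i j K d < lvl i j K y := by
            rw [lvl_K hdK hKi, hy3]; omega
          exact (ordv_lt_of_lvl_lt h2).not_ge h1
        · have hnxy : ¬ Adj (EC i j K) x y := fun hc => hnc ⟨hc, hAzy⟩
          have hAyx : Adj (EC i j K) y x := by
            have hA := hadj (n - 2 - t) (by omega)
            simp only [show (n - 2 - t) + 1 = n - 1 - t from by omega] at hA
            rw [← hy, ← hx] at hA
            rcases hA with h | h
            · exact absurd h hnxy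
            · exact h
          have hordyx := adj_ordv hAyx
          have hxl := lvl_le_of_ordv_lt hordyx
          rw [hy3] at hxl
          have hx3 : lvl i j K x = 3 := le_antisymm (lvl_le_three _) hxl
          exact ⟨hx3, hordyx⟩
  have hfin := (key (n - 1) (by omega) (le_refl _)).1
  simp only [show n - 1 - (n - 1) = 0 from by omega] at hfin
  rw [h0, lvl_i] at hfin
  omega

end SingleCI

open SingleCI in
/-- for any triple `⟨i, j | K⟩ ∈ I`, there is a DAG whose singleton
d-separation statements are exactly that triple (and its symmetric counterpart). -/
theorem single_CI_dag (I : IndepModel V) (hcard : 2 ≤ Fintype.card V)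
    (i j : V) (K : Finset V) (hij : i ≠ j) (hK : K ⊆ Finset.univ \ {i, j})
    (hI : I {i} {j} K) :
    ∃ G : EdgeSet V, IsDAG G ∧
      ∀ (a b : V) (C : Finset V), a ≠ b → a ∉ C → b ∉ C →
        (DSep G {a} {b} C ↔ ((a = i ∧ b = j ∨ a = j ∧ b = i) ∧ C = K)) := by
  have hKi : i ∉ K := by
    intro h
    have := hK h
    simp at this
  have hKj : j ∉ K := by
    intro h
    have := hK h
    simp at this
  have hKmem : ∀ k ∈ K, k ≠ i ∧ k ≠ j := by
    intro k hk
    have := hK hk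
    simpa using this
  refine ⟨EC i j K, isdag_EC i j K, ?_⟩
  intro a b C hab haC hbC
  constructor
  · intro hsep
    have hpair : (a = i ∧ b = j) ∨ (a = j ∧ b = i) := by
      by_contra hp
      rw [not_or] at hp
      apply hsep a (Finset.mem_singleton_self a) b (Finset.mem_singleton_self b)
      apply dconn_pair
      rcases (ordv_ne (i := i) (j := j) (K := K) hab).lt_or_gt with h | h
      · exact Or.inl (adj_iff.mpr ⟨h, hp.1⟩)
      · exact Or.inr (adj_iff.mpr ⟨h, fun hq => hp.2 ⟨hq.2, hq.1⟩⟩)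
    have hCK : C = K := by
      by_contra hCK
      have hiC : i ∉ C := by
        rcases hpair with ⟨rfl, rfl⟩ | ⟨rfl, rfl⟩
        · exact haC
        · exact hbC
      have hjC : j ∉ C := by
        rcases hpair with ⟨rfl, rfl⟩ | ⟨rfl, rfl⟩
        · exact hbC
        · exact haC
      have hwij : DConn (EC i j K) C i j := by
        rcases Classical.em (∃ k ∈ K, k ∉ C) with ⟨k, hkK, hkC⟩ | hno
        · obtain ⟨hki, hkj⟩ := hKmem k hkK
          have hAik : Adj (EC i j K) i k := by
            apply adj_iff.mpr
            refine ⟨ordv_lt_of_lvl_lt ?_, fun h => hkj h.2⟩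
            rw [lvl_i, lvl_K hkK hKi]; omega
          have hAkj : Adj (EC i j K) k j := by
            apply adj_iff.mpr
            refine ⟨ordv_lt_of_lvl_lt ?_, fun h => hki h.1⟩
            rw [lvl_K hkK hKi, lvl_j hij hKj]; omega
          apply dconn_triple (Or.inl hAik) (Or.inl hAkj)
          refine Or.inr ⟨?_, hkC⟩
          rintro ⟨-, hjk⟩
          have h1 := adj_ordv hjk
          have h2 : lvl i j K k < lvl i j K j := by
            rw [lvl_K hkK hKi, lvl_j hij hKj]; omega
          exact lt_asymm h1 (ordv_lt_of_lvl_lt h2)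
        · push_neg at hno
          have hsub : K ⊆ C := hno
          have hss : K ⊂ C := ⟨hsub, fun h => hCK (Finset.Subset.antisymm h hsub)⟩
          obtain ⟨c, hcC, hcK⟩ := Finset.exists_of_ssubset hss
          have hci : c ≠ i := fun h => hiC (h ▸ hcC)
          have hcj : c ≠ j := fun h => hjC (h ▸ hcC)
          have hc3 : lvl i j K c = 3 := lvl_R hci hcK hcj
          have hAic : Adj (EC i j K) i c := by
            apply adj_iff.mpr
            refine ⟨ordv_lt_of_lvl_lt ?_, fun h => hcj h.2⟩
            rw [lvl_i, hc3]; omega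
          have hAjc : Adj (EC i j K) j c := by
            apply adj_iff.mpr
            refine ⟨ordv_lt_of_lvl_lt ?_, fun h => hij.symm h.1⟩
            rw [lvl_j hij hKj, hc3]; omega
          apply dconn_triple (Or.inl hAic) (Or.inr hAjc)
          exact Or.inl ⟨⟨hAic, hAjc⟩, c, hcC, Relation.ReflTransGen.refl⟩
      rcases hpair with ⟨rfl, rfl⟩ | ⟨rfl, rfl⟩
      · exact hsep a (Finset.mem_singleton_self a) b (Finset.mem_singleton_self b) hwij
      · exact hsep a (Finset.mem_singleton_self a) b (Finset.mem_singleton_self b)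
          (dconn_symm hwij)
    exact ⟨hpair, hCK⟩
  · rintro ⟨hpair, rfl⟩
    rcases hpair with ⟨rfl, rfl⟩ | ⟨rfl, rfl⟩
    · intro x hx y hy
      rw [Finset.mem_singleton] at hx hy
      subst hx; subst hy
      exact no_walk hij hKi hKj
    · intro x hx y hy
      rw [Finset.mem_singleton] at hx hy
      subst hx; subst hy
      intro h
      exact no_walk hij hKi hKj (dconn_symm h)
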